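/- Let 𝔾=(𝕍,𝔼) be a locally finite, connected, countably infinite graph and let E ⊆ 𝔼 be such that every vertex of 𝕍 is incident to at least one edge of 𝔼∖E and any two distinct vertices of 𝕍 are ∞-connected in 𝔾∖E. Then the restriction map ω ↦ ω|_E from Ω_∅(𝔾) to (ZMod 2)^E is surjective, and the pushforward of UEG_𝔾 under this restriction is the Bernoulli(1/2) product measure on (ZMod 2)^E. -/

import Mathlib

open MeasureTheory

noncomputable section

instance : MeasurableSpace (ZMod 2) := ⊤

-- auxiliary ZMod 2 facts (placed before the classical instance so `decide` works)
lemma zmod2_cases (x : ZMod 2) : x = 0 ∨ x = 1 := by revert x; decide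

lemma zmod2_eq_zero_of_ne_one {x : ZMod 2} (h : x ≠ 1) : x = 0 := by
  rcases zmod2_cases x with h0 | h1
  · exact h0
  · exact absurd h1 h

lemma zmod2_add_self (x : ZMod 2) : x + x = 0 := by revert x; decide

lemma zmod2_add_one_ne (x : ZMod 2) : x ≠ x + 1 := by revert x; decide

lemma zmod2_eq_or_eq_add_one (a b : ZMod 2) : a = b ∨ a = b + 1 := by revert a b; decide

lemma zmod2_add_one_eq_iff {a b : ZMod 2} : a + 1 = b ↔ a = b + 1 := by revert a b; decide

instance : TopologicalSpace (ZMod 2) := ⊥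
instance : DiscreteTopology (ZMod 2) := ⟨rfl⟩
instance : MeasurableSingletonClass (ZMod 2) := ⟨fun _ => MeasurableSpace.measurableSet_top⟩
instance : BorelSpace (ZMod 2) := ⟨borel_eq_top_of_discrete.symm⟩
instance : IsTopologicalAddGroup (ZMod 2) :=
  { continuous_add := continuous_of_discreteTopology
    continuous_neg := continuous_of_discreteTopology }
instance : MeasurableAdd₂ (ZMod 2) := ⟨measurable_of_countable _⟩

/-- The source (mod-2 boundary) of a configuration on a set `E` of edges, at a vertex `v`:
the mod-2 number of open edges incident to `v`. -/
def srcAt {V : Type*} {E : Set (Sym2 V)} (ω : E → ZMod 2) (v : V) : ZMod 2 :=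
  (Set.ncard {e : E | ω e = 1 ∧ v ∈ (e : Sym2 V)} : ZMod 2)

/-- A configuration is even (sourceless). -/
def IsEvenConf {V : Type*} {E : Set (Sym2 V)} (ω : E → ZMod 2) : Prop :=
  ∀ v : V, srcAt ω v = 0

/-- `μ` is the uniform even subgraph measure (the Haar probability measure on the
group of even configurations): a probability measure supported on even configurations
and invariant under translation (symmetric difference) by every even configuration. -/
def IsUEG {V : Type*} (E : Set (Sym2 V)) (μ : Measure (E → ZMod 2)) : Prop :=
  IsProbabilityMeasure μ ∧ μ {ω | IsEvenConf ω} = 1 ∧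
    ∀ γ : E → ZMod 2, IsEvenConf γ → Measure.map (fun ω => ω + γ) μ = μ

/-- The graph of open edges of a configuration. -/
def openGraph {V : Type*} {E : Set (Sym2 V)} (ω : E → ZMod 2) : SimpleGraph V :=
  SimpleGraph.fromEdgeSet {e : Sym2 V | ∃ h : e ∈ E, ω ⟨e, h⟩ = 1}

/-- The connected component of `v` in the graph of open edges is infinite. -/
def PercolatesAt {V : Type*} {E : Set (Sym2 V)} (ω : E → ZMod 2) (v : V) : Prop :=
  {w : V | (openGraph ω).Reachable v w}.Infinite

/-- The hypercubic lattice `ℤ^d`. -/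
def latticeGraph (d : ℕ) : SimpleGraph (Fin d → ℤ) where
  Adj u v := ∑ i, |u i - v i| = 1
  symm := ⟨fun u v h => by simpa [abs_sub_comm] using h⟩
  loopless := ⟨fun u h => by simp at h⟩

attribute [local instance] Classical.propDecidable

/-- Restriction of a configuration to a smaller edge set. -/
def restrictConf {V : Type*} {E' E : Set (Sym2 V)} (h : E' ⊆ E) (ω : E → ZMod 2) :
    E' → ZMod 2 := fun e => ω ⟨e.1, h e.2⟩

/-- `ν` is the Bernoulli(1/2) product measure on configurations of `E`. -/
def IsBernoulliHalf {V : Type*} {E : Set (Sym2 V)} (ν : Measure (E → ZMod 2)) : Prop :=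
  IsProbabilityMeasure ν ∧
    ∀ (F : Finset E) (σ : E → ZMod 2),
      ν {ω | ∀ e ∈ F, ω e = σ e} = (1 / 2 : ENNReal) ^ F.card

/-! ### Auxiliary lemmas -/

section Aux

variable {V : Type*}

lemma srcAt_eq_sum {A : Set (Sym2 V)} (ω : A → ZMod 2) (v : V)
    (h : {e : A | v ∈ (e : Sym2 V)}.Finite) :
    srcAt ω v = ∑ e ∈ h.toFinset, ω e := by
  classical
  have hset : {e : A | ω e = 1 ∧ v ∈ (e : Sym2 V)}
      = ↑(h.toFinset.filter (fun e => ω e = 1)) := by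
    ext e
    simp only [Set.mem_setOf_eq, Finset.coe_filter, Set.Finite.mem_toFinset, and_comm]
  rw [srcAt, hset, Set.ncard_coe_finset]
  rw [← Finset.sum_filter_add_sum_filter_not h.toFinset (fun e => ω e = 1) ω]
  have h1 : ∑ e ∈ h.toFinset.filter (fun e => ω e = 1), ω e
      = ∑ _e ∈ h.toFinset.filter (fun e => ω e = 1), (1 : ZMod 2) :=
    Finset.sum_congr rfl fun e he => (Finset.mem_filter.mp he).2
  have h0 : ∑ e ∈ h.toFinset.filter (fun e => ¬ ω e = 1), ω e = 0 :=
    Finset.sum_eq_zero fun e he => zmod2_eq_zero_of_ne_one (Finset.mem_filter.mp he).2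
  rw [h1, h0, add_zero, Finset.sum_const, nsmul_eq_mul, mul_one]

lemma srcAt_add {A : Set (Sym2 V)} (ω γ : A → ZMod 2) (v : V)
    (h : {e : A | v ∈ (e : Sym2 V)}.Finite) :
    srcAt (ω + γ) v = srcAt ω v + srcAt γ v := by
  rw [srcAt_eq_sum (ω + γ) v h, srcAt_eq_sum ω v h, srcAt_eq_sum γ v h,
    ← Finset.sum_add_distrib]
  rfl

lemma srcAt_zero {A : Set (Sym2 V)} (v : V) : srcAt (0 : A → ZMod 2) v = 0 := by
  have : {e : A | (0 : A → ZMod 2) e = 1 ∧ v ∈ (e : Sym2 V)} = ∅ := by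
    ext e
    simp [zero_ne_one]
  rw [srcAt, this, Set.ncard_empty, Nat.cast_zero]

lemma isEvenConf_zero {A : Set (Sym2 V)} : IsEvenConf (0 : A → ZMod 2) :=
  fun v => srcAt_zero v

lemma srcAt_extend {A B : Set (Sym2 V)} (hAB : A ⊆ B) (ω : A → ZMod 2) (g : B → ZMod 2)
    (hg1 : ∀ (f : B) (h : (f : Sym2 V) ∈ A), g f = ω ⟨f, h⟩)
    (hg0 : ∀ f : B, (f : Sym2 V) ∉ A → g f = 0) (v : V) :
    srcAt g v = srcAt ω v := by
  classical
  have himg : Subtype.val '' {f : B | g f = 1 ∧ v ∈ (f : Sym2 V)}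
      = Subtype.val '' {e : A | ω e = 1 ∧ v ∈ (e : Sym2 V)} := by
    ext s
    constructor
    · rintro ⟨f, ⟨h1, h2⟩, rfl⟩
      by_cases hA : (f : Sym2 V) ∈ A
      · refine ⟨⟨f, hA⟩, ⟨?_, h2⟩, rfl⟩
        rw [← hg1 f hA]
        exact h1
      · rw [hg0 f hA] at h1
        exact absurd h1 zero_ne_one
    · rintro ⟨e, ⟨h1, h2⟩, rfl⟩
      refine ⟨⟨e, hAB e.2⟩, ⟨?_, h2⟩, rfl⟩
      rw [hg1 ⟨(e : Sym2 V), hAB e.2⟩ e.2]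
      simpa using h1
  calc ({f : B | g f = 1 ∧ v ∈ (f : Sym2 V)}.ncard : ZMod 2)
      = ((Subtype.val '' {f : B | g f = 1 ∧ v ∈ (f : Sym2 V)}).ncard : ZMod 2) := by
        rw [Set.ncard_image_of_injective _ Subtype.val_injective]
    _ = ((Subtype.val '' {e : A | ω e = 1 ∧ v ∈ (e : Sym2 V)}).ncard : ZMod 2) := by
        rw [himg]
    _ = ({e : A | ω e = 1 ∧ v ∈ (e : Sym2 V)}.ncard : ZMod 2) := by
        rw [Set.ncard_image_of_injective _ Subtype.val_injective]

lemma srcAt_single {B : Set (Sym2 V)} {e0 : Sym2 V} (he0 : e0 ∈ B) (v : V) :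
    srcAt (fun f : B => if (f : Sym2 V) = e0 then 1 else 0) v
      = if v ∈ e0 then 1 else 0 := by
  classical
  by_cases hv : v ∈ e0
  · have hset : {f : B | (if (f : Sym2 V) = e0 then (1 : ZMod 2) else 0) = 1
        ∧ v ∈ (f : Sym2 V)} = {⟨e0, he0⟩} := by
      ext f
      simp only [Set.mem_setOf_eq, Set.mem_singleton_iff]
      constructor
      · rintro ⟨h1, _h2⟩
        by_cases hf : (f : Sym2 V) = e0
        · exact Subtype.ext hf
        · rw [if_neg hf] at h1
          exact absurd h1 zero_ne_one
      · rintro rfl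
        exact ⟨by simp, hv⟩
    rw [srcAt, hset, Set.ncard_singleton, if_pos hv, Nat.cast_one]
  · have hset : {f : B | (if (f : Sym2 V) = e0 then (1 : ZMod 2) else 0) = 1
        ∧ v ∈ (f : Sym2 V)} = ∅ := by
      ext f
      simp only [Set.mem_setOf_eq, Set.mem_empty_iff_false, iff_false, not_and]
      intro h1 h2
      by_cases hf : (f : Sym2 V) = e0
      · exact hv (hf ▸ h2)
      · rw [if_neg hf] at h1
        exact zero_ne_one h1
    rw [srcAt, hset, Set.ncard_empty, Nat.cast_zero, if_neg hv]

variable {G : SimpleGraph V}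

lemma incFin (hlf : ∀ v : V, {e : Sym2 V | e ∈ G.edgeSet ∧ v ∈ e}.Finite)
    {A : Set (Sym2 V)} (hA : A ⊆ G.edgeSet) (v : V) :
    {e : A | v ∈ (e : Sym2 V)}.Finite := by
  have hsub : {e : A | v ∈ (e : Sym2 V)}
      ⊆ Subtype.val ⁻¹' {e : Sym2 V | e ∈ G.edgeSet ∧ v ∈ e} := by
    intro e he
    exact ⟨hA e.2, he⟩
  exact (Set.Finite.preimage Subtype.val_injective.injOn (hlf v)).subset hsub

lemma isEvenConf_add (hlf : ∀ v : V, {e : Sym2 V | e ∈ G.edgeSet ∧ v ∈ e}.Finite)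
    {A : Set (Sym2 V)} (hA : A ⊆ G.edgeSet) {ω γ : A → ZMod 2}
    (hω : IsEvenConf ω) (hγ : IsEvenConf γ) : IsEvenConf (ω + γ) := fun v => by
  rw [srcAt_add ω γ v (incFin hlf hA v), hω v, hγ v, add_zero]

lemma exists_delta (hlf : ∀ v : V, {e : Sym2 V | e ∈ G.edgeSet ∧ v ∈ e}.Finite)
    {E : Set (Sym2 V)} (hE : E ⊆ G.edgeSet)
    (hinfconn : ∀ x y : V, x ≠ y →
      ∃ γ : ↥(G.edgeSet \ E) → ZMod 2,
        ∀ v : V, srcAt γ v = if v = x ∨ v = y then 1 else 0)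
    {e0 : Sym2 V} (he0 : e0 ∈ E) :
    ∃ δ : ↥G.edgeSet → ZMod 2, IsEvenConf δ ∧
      ∀ f : ↥G.edgeSet, (f : Sym2 V) ∈ E →
        δ f = if (f : Sym2 V) = e0 then 1 else 0 := by
  classical
  obtain ⟨x, y, rfl⟩ : ∃ x y, e0 = s(x, y) :=
    Sym2.inductionOn e0 fun x y => ⟨x, y, rfl⟩
  have hxy : x ≠ y := (G.mem_edgeSet.mp (hE he0)).ne
  obtain ⟨γ, hγ⟩ := hinfconn x y hxy
  refine ⟨(fun f : ↥G.edgeSet => if (f : Sym2 V) = s(x, y) then 1 else 0) +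
      (fun f : ↥G.edgeSet => if h : (f : Sym2 V) ∈ G.edgeSet \ E then γ ⟨f, h⟩ else 0),
      ?_, ?_⟩
  · intro v
    have e1 : srcAt ((fun f : ↥G.edgeSet => if (f : Sym2 V) = s(x, y) then 1 else 0) +
        (fun f : ↥G.edgeSet => if h : (f : Sym2 V) ∈ G.edgeSet \ E then γ ⟨f, h⟩ else 0)) v
        = srcAt (fun f : ↥G.edgeSet => if (f : Sym2 V) = s(x, y) then 1 else 0) v
          + srcAt (fun f : ↥G.edgeSet =>
              if h : (f : Sym2 V) ∈ G.edgeSet \ E then γ ⟨f, h⟩ else 0) v :=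
      srcAt_add _ _ v (incFin hlf (subset_refl _) v)
    have e2 : srcAt (fun f : ↥G.edgeSet => if (f : Sym2 V) = s(x, y) then 1 else 0) v
        = if v ∈ s(x, y) then 1 else 0 := srcAt_single (hE he0) v
    have e3 : srcAt (fun f : ↥G.edgeSet =>
        if h : (f : Sym2 V) ∈ G.edgeSet \ E then γ ⟨f, h⟩ else 0) v
        = if v = x ∨ v = y then 1 else 0 :=
      (srcAt_extend Set.diff_subset γ _
        (fun f h => dif_pos h) (fun f h => dif_neg h) v).trans (hγ v)
    rw [e1, e2, e3]
    by_cases h : v = x ∨ v = y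
    · rw [if_pos (Sym2.mem_iff.mpr h), if_pos h]
      exact zmod2_add_self 1
    · rw [if_neg (fun hc => h (Sym2.mem_iff.mp hc)), if_neg h, add_zero]
  · intro f hf
    have h0 : (if h : (f : Sym2 V) ∈ G.edgeSet \ E then γ ⟨f, h⟩ else 0) = 0 :=
      dif_neg fun hc => hc.2 hf
    show (if (f : Sym2 V) = s(x, y) then 1 else 0)
        + (if h : (f : Sym2 V) ∈ G.edgeSet \ E then γ ⟨f, h⟩ else 0)
        = if (f : Sym2 V) = s(x, y) then 1 else 0
    rw [h0, add_zero]

lemma exists_even_matching (hlf : ∀ v : V, {e : Sym2 V | e ∈ G.edgeSet ∧ v ∈ e}.Finite)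
    {E : Set (Sym2 V)} (hE : E ⊆ G.edgeSet)
    (hinfconn : ∀ x y : V, x ≠ y →
      ∃ γ : ↥(G.edgeSet \ E) → ZMod 2,
        ∀ v : V, srcAt γ v = if v = x ∨ v = y then 1 else 0)
    (F : Finset ↥E) (σ : ↥E → ZMod 2) :
    ∃ ω : ↥G.edgeSet → ZMod 2, IsEvenConf ω ∧
      ∀ f ∈ F, ω ⟨(f : Sym2 V), hE f.2⟩ = σ f := by
  classical
  choose δ hδev hδres using fun f : ↥E => exists_delta hlf hE hinfconn f.2
  refine ⟨∑ f ∈ F.filter (fun f => σ f = 1), δ f, ?_, ?_⟩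
  · exact Finset.sum_induction δ IsEvenConf
      (fun a b ha hb => isEvenConf_add hlf (subset_refl _) ha hb)
      isEvenConf_zero (fun f _ => hδev f)
  · intro g hg
    rw [Finset.sum_apply]
    have hterm : ∀ f ∈ F.filter (fun f => σ f = 1),
        δ f ⟨(g : Sym2 V), hE g.2⟩ = if f = g then 1 else 0 := by
      intro f _
      rw [hδres f ⟨(g : Sym2 V), hE g.2⟩ g.2]
      by_cases hfg : f = g
      · subst hfg
        rw [if_pos rfl, if_pos rfl]
      · rw [if_neg (show ¬((⟨(g : Sym2 V), hE g.2⟩ : ↥G.edgeSet) : Sym2 V) = (f : Sym2 V)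
            from fun hc => hfg (Subtype.ext hc.symm)), if_neg hfg]
    rw [Finset.sum_congr rfl hterm, Finset.sum_ite_eq' _ g (fun _ => (1 : ZMod 2))]
    by_cases hσ : σ g = 1
    · rw [if_pos (show g ∈ F.filter (fun f => σ f = 1)
        from Finset.mem_filter.mpr ⟨hg, hσ⟩), hσ]
    · rw [if_neg (show g ∉ F.filter (fun f => σ f = 1)
        from fun hc => hσ (Finset.mem_filter.mp hc).2),
        zmod2_eq_zero_of_ne_one hσ]

lemma isClosed_even (hlf : ∀ v : V, {e : Sym2 V | e ∈ G.edgeSet ∧ v ∈ e}.Finite) :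
    IsClosed {ω : ↥G.edgeSet → ZMod 2 | IsEvenConf ω} := by
  have hrw : {ω : ↥G.edgeSet → ZMod 2 | IsEvenConf ω}
      = ⋂ v : V, {ω : ↥G.edgeSet → ZMod 2 | srcAt ω v = 0} := by
    ext ω
    simp [IsEvenConf, Set.mem_iInter]
  rw [hrw]
  refine isClosed_iInter fun v => ?_
  have h := incFin hlf (subset_refl G.edgeSet) v
  have hc : Continuous fun ω : ↥G.edgeSet → ZMod 2 => srcAt ω v := by
    have heq : (fun ω : ↥G.edgeSet → ZMod 2 => srcAt ω v)
        = fun ω => ∑ e ∈ h.toFinset, ω e := funext fun ω => srcAt_eq_sum ω v h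
    rw [heq]
    exact continuous_finset_sum _ fun e _ => continuous_apply e
  exact (isClosed_singleton (x := (0 : ZMod 2))).preimage hc

lemma measurableSet_even [Countable V]
    (hlf : ∀ v : V, {e : Sym2 V | e ∈ G.edgeSet ∧ v ∈ e}.Finite) :
    MeasurableSet {ω : ↥G.edgeSet → ZMod 2 | IsEvenConf ω} := by
  have hrw : {ω : ↥G.edgeSet → ZMod 2 | IsEvenConf ω}
      = ⋂ v : V, {ω : ↥G.edgeSet → ZMod 2 | srcAt ω v = 0} := by
    ext ω
    simp [IsEvenConf, Set.mem_iInter]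
  rw [hrw]
  refine MeasurableSet.iInter fun v => ?_
  have h := incFin hlf (subset_refl G.edgeSet) v
  have hm : Measurable fun ω : ↥G.edgeSet → ZMod 2 => srcAt ω v := by
    have heq : (fun ω : ↥G.edgeSet → ZMod 2 => srcAt ω v)
        = fun ω => ∑ e ∈ h.toFinset, ω e := funext fun ω => srcAt_eq_sum ω v h
    rw [heq]
    exact Finset.measurable_sum _ fun e _ => measurable_pi_apply e
  exact hm (measurableSet_singleton (0 : ZMod 2))

lemma measurableSet_cyl {ι κ : Type*} (F : Finset κ) (g : κ → ι) (c : κ → ZMod 2) :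
    MeasurableSet {ω : ι → ZMod 2 | ∀ k ∈ F, ω (g k) = c k} := by
  have hrw : {ω : ι → ZMod 2 | ∀ k ∈ F, ω (g k) = c k}
      = ⋂ k ∈ F, (fun ω : ι → ZMod 2 => ω (g k)) ⁻¹' {c k} := by
    ext ω
    simp
  rw [hrw]
  exact F.measurableSet_biInter fun k _ =>
    (measurable_pi_apply (g k)) (measurableSet_singleton (c k))

/-- The even configurations form an additive subgroup. -/
def evenSubgroup (G : SimpleGraph V)
    (hlf : ∀ v : V, {e : Sym2 V | e ∈ G.edgeSet ∧ v ∈ e}.Finite) :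
    AddSubgroup (↥G.edgeSet → ZMod 2) where
  carrier := {ω | IsEvenConf ω}
  add_mem' := fun ha hb => isEvenConf_add hlf (subset_refl _) ha hb
  zero_mem' := isEvenConf_zero
  neg_mem' := by
    intro ω hω
    have hneg : -ω = ω := by
      funext e
      exact neg_eq_of_add_eq_zero_left (zmod2_add_self (ω e))
    rw [hneg]
    exact hω

lemma key_cylinder [Countable V]
    (hlf : ∀ v : V, {e : Sym2 V | e ∈ G.edgeSet ∧ v ∈ e}.Finite)
    {E : Set (Sym2 V)} (hE : E ⊆ G.edgeSet)
    (hinfconn : ∀ x y : V, x ≠ y →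
      ∃ γ : ↥(G.edgeSet \ E) → ZMod 2,
        ∀ v : V, srcAt γ v = if v = x ∨ v = y then 1 else 0)
    (μ : Measure (↥G.edgeSet → ZMod 2)) (hUEG : IsUEG G.edgeSet μ)
    (F : Finset ↥E) (σ : ↥E → ZMod 2) :
    μ {ω | ∀ f ∈ F, ω ⟨(f : Sym2 V), hE f.2⟩ = σ f} = (1 / 2 : ENNReal) ^ F.card := by
  classical
  obtain ⟨hprob, _hsupp, hinv⟩ := hUEG
  induction F using Finset.induction_on with
  | empty =>
      simp only [Finset.notMem_empty, false_implies, implies_true, Set.setOf_true,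
        Finset.card_empty, pow_zero]
      exact hprob.measure_univ
  | @insert e F he ih =>
      obtain ⟨δ, hδev, hδres⟩ := exists_delta hlf hE hinfconn e.2
      set ι : ↥E → ↥G.edgeSet := fun f => ⟨(f : Sym2 V), hE f.2⟩ with hι
      have hδι : ∀ f : ↥E, δ (ι f) = if f = e then 1 else 0 := by
        intro f
        rw [hδres (ι f) f.2]
        by_cases hfe : f = e
        · rw [if_pos (by rw [hfe]), if_pos hfe]
        · rw [if_neg fun hc => hfe (Subtype.ext hc), if_neg hfe]
      have hδe : δ (ι e) = 1 := by rw [hδι e, if_pos rfl]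
      have hδf : ∀ f ∈ F, δ (ι f) = 0 := fun f hf => by
        rw [hδι f, if_neg (show ¬f = e from fun h => he (h ▸ hf))]
      set A : Set (↥G.edgeSet → ZMod 2) := {ω | ∀ f ∈ F, ω (ι f) = σ f} with hA
      set S : ZMod 2 → Set (↥G.edgeSet → ZMod 2) :=
        fun c => A ∩ {ω | ω (ι e) = c} with hS
      have hAm : MeasurableSet A := measurableSet_cyl F ι σ
      have hSm : ∀ c, MeasurableSet (S c) := by
        intro c
        refine hAm.inter ?_
        have hrw : {ω : ↥G.edgeSet → ZMod 2 | ω (ι e) = c}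
            = (fun ω : ↥G.edgeSet → ZMod 2 => ω (ι e)) ⁻¹' {c} := rfl
        rw [hrw]
        exact (measurable_pi_apply (ι e)) (measurableSet_singleton c)
      have hgoal_set : {ω : ↥G.edgeSet → ZMod 2 | ∀ f ∈ insert e F, ω (ι f) = σ f}
          = S (σ e) := by
        ext ω
        simp only [hS, hA, Set.mem_setOf_eq, Set.mem_inter_iff, Finset.forall_mem_insert]
        tauto
      have hTmeas : Measurable (fun ω : ↥G.edgeSet → ZMod 2 => ω + δ) :=
        measurable_pi_iff.mpr fun f =>
          (measurable_of_countable (fun x : ZMod 2 => x + δ f)).comp (measurable_pi_apply f)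
      have hflip : μ (S (σ e)) = μ (S (σ e + 1)) := by
        have hinvδ := hinv δ hδev
        calc μ (S (σ e)) = (Measure.map (fun ω => ω + δ) μ) (S (σ e)) := by rw [hinvδ]
          _ = μ ((fun ω => ω + δ) ⁻¹' S (σ e)) := Measure.map_apply hTmeas (hSm _)
          _ = μ (S (σ e + 1)) := by
              congr 1
              ext ω
              simp only [Set.mem_preimage, hS, hA, Set.mem_inter_iff, Set.mem_setOf_eq,
                Pi.add_apply]
              constructor
              · rintro ⟨h1, h2⟩
                refine ⟨fun f hf => ?_, ?_⟩
                · have := h1 f hf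
                  rwa [hδf f hf, add_zero] at this
                · rw [hδe] at h2
                  exact zmod2_add_one_eq_iff.mp h2
              · rintro ⟨h1, h2⟩
                refine ⟨fun f hf => by rw [hδf f hf, add_zero]; exact h1 f hf, ?_⟩
                rw [hδe]
                exact zmod2_add_one_eq_iff.mpr h2
      have hsplit : μ A = μ (S (σ e)) + μ (S (σ e + 1)) := by
        have hdisj : Disjoint (S (σ e)) (S (σ e + 1)) := by
          refine Set.disjoint_left.mpr ?_
          rintro ω ⟨_, h1⟩ ⟨_, h2⟩
          rw [Set.mem_setOf_eq] at h1 h2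
          rw [h1] at h2
          exact zmod2_add_one_ne (σ e) h2
        have hcover : A = S (σ e) ∪ S (σ e + 1) := by
          ext ω
          constructor
          · intro hω
            rcases zmod2_eq_or_eq_add_one (ω (ι e)) (σ e) with h | h
            · exact Or.inl ⟨hω, h⟩
            · exact Or.inr ⟨hω, h⟩
          · rintro (⟨h, _⟩ | ⟨h, _⟩) <;> exact h
        rw [hcover, measure_union hdisj (hSm _)]
      have hAval : μ A = (1 / 2 : ENNReal) ^ F.card := ih
      have h2 : μ (S (σ e)) + μ (S (σ e)) = (1 / 2 : ENNReal) ^ F.card := by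
        rw [← hAval, hsplit, ← hflip]
      have hhalf : ((1 : ENNReal) / 2) ^ F.card
          = 2 * ((1 / 2 : ENNReal)) ^ (F.card + 1) := by
        rw [pow_succ]
        rw [show (2 : ENNReal) * ((1 / 2 : ENNReal) ^ F.card * (1 / 2))
            = ((2 : ENNReal) * (1 / 2)) * (1 / 2 : ENNReal) ^ F.card by ring]
        rw [show (2 : ENNReal) * (1 / 2) = 1 by
          rw [one_div, ENNReal.mul_inv_cancel (by norm_num) ENNReal.ofNat_ne_top]]
        rw [one_mul]
      rw [hgoal_set, Finset.card_insert_of_notMem he]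
      rw [← two_mul] at h2
      rw [hhalf] at h2
      exact (ENNReal.mul_right_inj (by norm_num) ENNReal.ofNat_ne_top).mp h2

end Aux

theorem ueg_marginal_bernoulli_half {V : Type} [Countable V] [Infinite V]
    (G : SimpleGraph V)
    (hlf : ∀ v : V, {e : Sym2 V | e ∈ G.edgeSet ∧ v ∈ e}.Finite)
    (hconn : G.Connected)
    (E : Set (Sym2 V)) (hE : E ⊆ G.edgeSet)
    (hcover : ∀ v : V, ∃ e ∈ G.edgeSet \ E, v ∈ e)
    (hinfconn : ∀ x y : V, x ≠ y →
      ∃ γ : ↥(G.edgeSet \ E) → ZMod 2,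
        ∀ v : V, srcAt γ v = if v = x ∨ v = y then 1 else 0) :
    (∀ σ : E → ZMod 2, ∃ ω : G.edgeSet → ZMod 2,
        IsEvenConf ω ∧ restrictConf hE ω = σ) ∧
    (∃ μ, IsUEG G.edgeSet μ) ∧
    (∀ μ, IsUEG G.edgeSet μ → IsBernoulliHalf (Measure.map (restrictConf hE) μ)) := by
  classical
  refine ⟨?_, ?_, ?_⟩
  · -- Part 1: surjectivity of the restriction map, via compactness
    intro σ
    set K : Finset ↥E → Set (↥G.edgeSet → ZMod 2) :=
      fun F => {ω | IsEvenConf ω ∧ ∀ f ∈ F, ω ⟨(f : Sym2 V), hE f.2⟩ = σ f} with hK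
    have hne : ∀ F, (K F).Nonempty := by
      intro F
      obtain ⟨ω, h1, h2⟩ := exists_even_matching hlf hE hinfconn F σ
      exact ⟨ω, h1, h2⟩
    have hcl : ∀ F, IsClosed (K F) := by
      intro F
      have h2 : IsClosed {ω : ↥G.edgeSet → ZMod 2 |
          ∀ f ∈ F, ω ⟨(f : Sym2 V), hE f.2⟩ = σ f} := by
        have hrw : {ω : ↥G.edgeSet → ZMod 2 | ∀ f ∈ F, ω ⟨(f : Sym2 V), hE f.2⟩ = σ f}
            = ⋂ f ∈ F, (fun ω : ↥G.edgeSet → ZMod 2 =>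
                ω ⟨(f : Sym2 V), hE f.2⟩) ⁻¹' {σ f} := by
          ext ω
          simp
        rw [hrw]
        exact isClosed_biInter fun f _ =>
          isClosed_singleton.preimage (continuous_apply _)
      exact (isClosed_even hlf).inter h2
    have hdir : Directed (· ⊇ ·) K := by
      intro F1 F2
      refine ⟨F1 ∪ F2, fun ω hω => ⟨hω.1, fun f hf => hω.2 f (Finset.mem_union_left _ hf)⟩,
        fun ω hω => ⟨hω.1, fun f hf => hω.2 f (Finset.mem_union_right _ hf)⟩⟩
    obtain ⟨ω, hω⟩ :=
      IsCompact.nonempty_iInter_of_directed_nonempty_isCompact_isClosed K hdir hne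
        (fun F => (hcl F).isCompact) hcl
    rw [Set.mem_iInter] at hω
    exact ⟨ω, (hω ∅).1, funext fun f => (hω {f}).2 f (Finset.mem_singleton_self f)⟩
  · -- Part 2: existence of UEG, via Haar measure on the compact group of even configs
    set H : AddSubgroup (↥G.edgeSet → ZMod 2) := evenSubgroup G hlf with hH
    haveI : CompactSpace ↥H :=
      isCompact_iff_compactSpace.mp (isClosed_even hlf).isCompact
    haveI : Nonempty ↥H := ⟨0⟩
    haveI : BorelSpace ↥H := Subtype.borelSpace (H : Set (↥G.edgeSet → ZMod 2))
    set ν : Measure ↥H :=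
      Measure.addHaarMeasure (⊤ : TopologicalSpace.PositiveCompacts ↥H) with hν
    have hν1 : ν Set.univ = 1 := by
      have h := Measure.addHaarMeasure_self
        (K₀ := (⊤ : TopologicalSpace.PositiveCompacts ↥H))
      rwa [TopologicalSpace.PositiveCompacts.coe_top] at h
    haveI : IsProbabilityMeasure ν := ⟨hν1⟩
    have hval : Measurable (Subtype.val : ↥H → (↥G.edgeSet → ZMod 2)) :=
      measurable_subtype_coe
    refine ⟨Measure.map Subtype.val ν, Measure.isProbabilityMeasure_map hval.aemeasurable, ?_, ?_⟩
    · rw [Measure.map_apply hval (measurableSet_even hlf)]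
      have hpre : (Subtype.val : ↥H → (↥G.edgeSet → ZMod 2)) ⁻¹'
          {ω | IsEvenConf ω} = Set.univ := by
        ext z
        simp only [Set.mem_preimage, Set.mem_setOf_eq, Set.mem_univ, iff_true]
        exact z.2
      rw [hpre, hν1]
    · intro γ hγ
      set γH : ↥H := ⟨γ, hγ⟩ with hγH
      have htrans : Measurable (fun z : ↥H => z + γH) :=
        (continuous_add_right γH).measurable
      have hTmeas : Measurable (fun ω : ↥G.edgeSet → ZMod 2 => ω + γ) :=
        measurable_pi_iff.mpr fun f =>
          (measurable_of_countable (fun x : ZMod 2 => x + γ f)).comp (measurable_pi_apply f)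
      calc Measure.map (fun ω => ω + γ) (Measure.map Subtype.val ν)
          = Measure.map ((fun ω => ω + γ) ∘ Subtype.val) ν :=
            Measure.map_map hTmeas hval
        _ = Measure.map (Subtype.val ∘ (fun z : ↥H => z + γH)) ν := by
            congr 1
        _ = Measure.map Subtype.val (Measure.map (fun z : ↥H => z + γH) ν) :=
            (Measure.map_map hval htrans).symm
        _ = Measure.map Subtype.val ν := by
            have : Measure.map (fun z : ↥H => z + γH) ν = ν := by
              have h := map_add_left_eq_self ν γH
              have heq : (fun z : ↥H => z + γH) = fun z : ↥H => γH + z := by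
                funext z
                exact add_comm z γH
              rw [heq]
              exact h
            rw [this]
  · -- Part 3: the marginal on E is Bernoulli(1/2)
    intro μ hUEG
    haveI := hUEG.1
    have hR : Measurable (restrictConf hE : (↥G.edgeSet → ZMod 2) → ↥E → ZMod 2) :=
      measurable_pi_iff.mpr fun f => measurable_pi_apply _
    refine ⟨Measure.isProbabilityMeasure_map hR.aemeasurable, ?_⟩
    intro F σ
    have hcylm : MeasurableSet {ω : ↥E → ZMod 2 | ∀ e ∈ F, ω e = σ e} := by
      have := measurableSet_cyl F (id : ↥E → ↥E) σ
      simpa using this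
    rw [Measure.map_apply hR hcylm]
    have hpre : (restrictConf hE) ⁻¹' {ω : ↥E → ZMod 2 | ∀ e ∈ F, ω e = σ e}
        = {ω : ↥G.edgeSet → ZMod 2 | ∀ f ∈ F, ω ⟨(f : Sym2 V), hE f.2⟩ = σ f} := rfl
    rw [hpre]
    exact key_cylinder hlf hE hinfconn μ hUEG F σ
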